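/- Let x = P(x) be a minimax-PPS with greatest fixed point g* ∈ [0,1]^n. Then there exists a mixed policy σ* for the max player such that g*_{σ*,*} = g*; indeed, one may take σ*(i) to be any mixed strategy on the rows attaining the value Val(A_i(g*)) of the matrix game A_i(g*). (This is the equational content of the statement that in a branching concurrent stochastic game the player maximizing the non-reachability probability has an optimal mixed static strategy.) -/

import Mathlib

open Filter Topology

/-- A probabilistic polynomial in `n` variables: `∑ r, p r * x ^ expo r`,
with nonnegative coefficients summing to at most 1. -/
structure ProbPoly (n : ℕ) where
  numTerms : ℕ
  p : Fin numTerms → ℝ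
  expo : Fin numTerms → Fin n → ℕ
  p_nonneg : ∀ r, 0 ≤ p r
  p_sum_le_one : ∑ r, p r ≤ 1

/-- Evaluation of a probabilistic polynomial. -/
def ProbPoly.eval {n : ℕ} (P : ProbPoly n) (x : Fin n → ℝ) : ℝ :=
  ∑ r, P.p r * ∏ i, x i ^ P.expo r i

/-- The unit box `[0,1]^n`. -/
def box01 (n : ℕ) : Set (Fin n → ℝ) := {x | ∀ i, 0 ≤ x i ∧ x i ≤ 1}

/-- The minimax value of the zero-sum matrix game with payoff matrix `B`:
`Val(B) = max_{s ∈ Δ_k} min_{t ∈ Δ_m} sᵀ B t`. -/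
noncomputable def gameVal {k m : ℕ} (B : Matrix (Fin k) (Fin m) ℝ) : ℝ :=
  ⨆ s : stdSimplex ℝ (Fin k), ⨅ t : stdSimplex ℝ (Fin m),
    ∑ i : Fin k, ∑ j : Fin m, s.1 i * B i j * t.1 j

/-- A probability distribution on `Fin k`. -/
def IsDist {k : ℕ} (d : Fin k → ℝ) : Prop := (∀ j, 0 ≤ d j) ∧ ∑ j, d j = 1

/-- `g` is the greatest fixed point of `F` in `[0,1]^n`. -/
def IsGFP {n : ℕ} (F : (Fin n → ℝ) → Fin n → ℝ) (g : Fin n → ℝ) : Prop :=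
  g ∈ box01 n ∧ F g = g ∧ ∀ g' ∈ box01 n, F g' = g' → g' ≤ g

/-- `q` is the least fixed point of `F` in `[0,1]^n`. -/
def IsLFP {n : ℕ} (F : (Fin n → ℝ) → Fin n → ℝ) (q : Fin n → ℝ) : Prop :=
  q ∈ box01 n ∧ F q = q ∧ ∀ q' ∈ box01 n, F q' = q' → q ≤ q'

/-- A minimax probabilistic polynomial system (minimax-PPS) in `n` variables:
for each `i`, an `nr i × nc i` matrix of probabilistic polynomials. -/
structure MinimaxPPS (n : ℕ) where
  nr : Fin n → ℕ
  nc : Fin n → ℕ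
  nr_pos : ∀ i, 0 < nr i
  nc_pos : ∀ i, 0 < nc i
  q : (i : Fin n) → Fin (nr i) → Fin (nc i) → ProbPoly n

namespace MinimaxPPS

/-- The payoff matrix `A_i(x)`. -/
noncomputable def A {n : ℕ} (P : MinimaxPPS n) (i : Fin n) (x : Fin n → ℝ) :
    Matrix (Fin (P.nr i)) (Fin (P.nc i)) ℝ :=
  Matrix.of fun j k => (P.q i j k).eval x

/-- `P(x)`: coordinatewise the value of the matrix game `A_i(x)`. -/
noncomputable def eval {n : ℕ} (P : MinimaxPPS n) (x : Fin n → ℝ) : Fin n → ℝ :=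
  fun i => gameVal (P.A i x)

/-- The minPPS `P_{σ,*}` obtained by fixing a mixed policy `σ` for the max player. -/
noncomputable def fixMax {n : ℕ} (P : MinimaxPPS n)
    (σ : (i : Fin n) → Fin (P.nr i) → ℝ) (x : Fin n → ℝ) : Fin n → ℝ :=
  fun i => ⨅ k : Fin (P.nc i), ∑ j, σ i j * (P.q i j k).eval x

/-- The maxPPS `P_{*,τ}` obtained by fixing a mixed policy `τ` for the min player. -/
noncomputable def fixMin {n : ℕ} (P : MinimaxPPS n)
    (τ : (i : Fin n) → Fin (P.nc i) → ℝ) (x : Fin n → ℝ) : Fin n → ℝ :=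
  fun i => ⨆ j : Fin (P.nr i), ∑ k, τ i k * (P.q i j k).eval x

/-- The PPS `P_{σ,τ}` obtained by fixing both policies. -/
def fixBoth {n : ℕ} (P : MinimaxPPS n)
    (σ : (i : Fin n) → Fin (P.nr i) → ℝ) (τ : (i : Fin n) → Fin (P.nc i) → ℝ)
    (x : Fin n → ℝ) : Fin n → ℝ :=
  fun i => ∑ j, ∑ k, σ i j * τ i k * (P.q i j k).eval x

end MinimaxPPS

/-- A PPS: each coordinate is a probabilistic polynomial. -/
structure PPS (n : ℕ) where
  poly : Fin n → ProbPoly n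

namespace PPS

def eval {n : ℕ} (P : PPS n) (x : Fin n → ℝ) : Fin n → ℝ := fun i => (P.poly i).eval x

/-- Edge of the dependency graph: `x_j` appears (with a nonzero coefficient) in `P_i(x)`. -/
def depends {n : ℕ} (P : PPS n) (i j : Fin n) : Prop :=
  ∃ r, (P.poly i).p r ≠ 0 ∧ (P.poly i).expo r j ≠ 0

end PPS

/-- A probabilistic polynomial is linear degenerate: every term with nonzero coefficient
has total degree exactly 1 (so it is linear with no constant term), and the
coefficients sum to exactly 1. -/
def IsLDPoly {n : ℕ} (Q : ProbPoly n) : Prop :=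
  (∀ r, Q.p r ≠ 0 → ∑ j, Q.expo r j = 1) ∧ ∑ r, Q.p r = 1

/-- There exists a bottom strongly connected component of the dependency relation `dep`
all of whose members satisfy `ld`. -/
def IsLDBottom {n : ℕ} (dep : Fin n → Fin n → Prop) (ld : Fin n → Prop) : Prop :=
  ∃ S : Set (Fin n), S.Nonempty ∧
    (∀ i ∈ S, ∀ j ∈ S, Relation.ReflTransGen dep i j) ∧
    (∀ i ∈ S, ∀ j, dep i j → j ∈ S) ∧
    (∀ i ∈ S, ld i)

/-- A PPS is linear degenerate free (LDF): no bottom strongly connected component of its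
dependency graph induces an LD subsystem. -/
def PPS.IsLDF {n : ℕ} (P : PPS n) : Prop :=
  ¬ IsLDBottom P.depends (fun i => IsLDPoly (P.poly i))

namespace MinimaxPPS

/-- Dependency relation of the PPS `P_{σ,τ}`. -/
def dependsMix {n : ℕ} (P : MinimaxPPS n) (σ : (i : Fin n) → Fin (P.nr i) → ℝ)
    (τ : (i : Fin n) → Fin (P.nc i) → ℝ) (i j : Fin n) : Prop :=
  ∃ a b r, σ i a ≠ 0 ∧ τ i b ≠ 0 ∧ (P.q i a b).p r ≠ 0 ∧ (P.q i a b).expo r j ≠ 0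

/-- Coordinate `i` of the PPS `P_{σ,τ}` is linear degenerate. -/
def IsLDMixAt {n : ℕ} (P : MinimaxPPS n) (σ : (i : Fin n) → Fin (P.nr i) → ℝ)
    (τ : (i : Fin n) → Fin (P.nc i) → ℝ) (i : Fin n) : Prop :=
  (∀ a b r, σ i a ≠ 0 → τ i b ≠ 0 → (P.q i a b).p r ≠ 0 → ∑ j, (P.q i a b).expo r j = 1) ∧
  (∑ a, ∑ b, σ i a * τ i b * ∑ r, (P.q i a b).p r) = 1

/-- A mixed min-player policy `τ` is LDF if for every mixed max-player policy `σ`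
the PPS `P_{σ,τ}` is an LDF-PPS. -/
def IsLDFPolicy {n : ℕ} (P : MinimaxPPS n) (τ : (i : Fin n) → Fin (P.nc i) → ℝ) : Prop :=
  ∀ σ : (i : Fin n) → Fin (P.nr i) → ℝ, (∀ i, IsDist (σ i)) →
    ¬ IsLDBottom (P.dependsMix σ τ) (P.IsLDMixAt σ τ)

end MinimaxPPS

/-- The three forms of equations in an SNF minimax-PPS. -/
inductive SNFForm | L | Q | M
  deriving DecidableEq

/-- A minimax-PPS in simple normal form (SNF): each coordinate is of form L
(linear, `a0 i + ∑ j, a i j * x j`), form Q (`x (quadL i) * x (quadR i)`), or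
form M (the value of a matrix game each of whose entries is a variable or the
constant 1, encoded by `Option (Fin n)` with `none` standing for `1`). -/
structure SNFPPS (n : ℕ) where
  form : Fin n → SNFForm
  a0 : Fin n → ℝ
  a : Fin n → Fin n → ℝ
  quadL : Fin n → Fin n
  quadR : Fin n → Fin n
  nr : Fin n → ℕ
  nc : Fin n → ℕ
  nr_pos : ∀ i, 0 < nr i
  nc_pos : ∀ i, 0 < nc i
  entry : (i : Fin n) → Fin (nr i) → Fin (nc i) → Option (Fin n)
  a0_nonneg : ∀ i, 0 ≤ a0 i
  a_nonneg : ∀ i j, 0 ≤ a i j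
  a_sum_le_one : ∀ i, a0 i + ∑ j, a i j ≤ 1

namespace SNFPPS

noncomputable def eval {n : ℕ} (P : SNFPPS n) (x : Fin n → ℝ) : Fin n → ℝ := fun i =>
  match P.form i with
  | SNFForm.L => P.a0 i + ∑ j, P.a i j * x j
  | SNFForm.Q => x (P.quadL i) * x (P.quadR i)
  | SNFForm.M => gameVal (Matrix.of fun j k => (P.entry i j k).elim 1 x)

/-- The maxPPS `P_{*,τ}` obtained by fixing a mixed policy `τ` for the min player. -/
noncomputable def fixMin {n : ℕ} (P : SNFPPS n)
    (τ : (i : Fin n) → Fin (P.nc i) → ℝ) (x : Fin n → ℝ) : Fin n → ℝ := fun i =>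
  match P.form i with
  | SNFForm.L => P.a0 i + ∑ j, P.a i j * x j
  | SNFForm.Q => x (P.quadL i) * x (P.quadR i)
  | SNFForm.M => ⨆ j : Fin (P.nr i), ∑ k, τ i k * (P.entry i j k).elim 1 x

/-- The minPPS `P_{σ,*}` obtained by fixing a mixed policy `σ` for the max player. -/
noncomputable def fixMax {n : ℕ} (P : SNFPPS n)
    (σ : (i : Fin n) → Fin (P.nr i) → ℝ) (x : Fin n → ℝ) : Fin n → ℝ := fun i =>
  match P.form i with
  | SNFForm.L => P.a0 i + ∑ j, P.a i j * x j
  | SNFForm.Q => x (P.quadL i) * x (P.quadR i)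
  | SNFForm.M => ⨅ k : Fin (P.nc i), ∑ j, σ i j * (P.entry i j k).elim 1 x

/-- `S` is closed under the rules defining the least closure set: it contains every
deficient form-L variable, and is closed under rules (a) and (b). -/
def Closed {n : ℕ} (P : SNFPPS n) (S : Set (Fin n)) : Prop :=
  (∀ i, P.form i = SNFForm.L → P.a0 i + ∑ j, P.a i j < 1 → i ∈ S) ∧
  (∀ i, P.form i = SNFForm.L → (∃ j ∈ S, P.a i j ≠ 0) → i ∈ S) ∧
  (∀ i, P.form i = SNFForm.Q → (P.quadL i ∈ S ∨ P.quadR i ∈ S) → i ∈ S) ∧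
  (∀ i, P.form i = SNFForm.M →
    (∀ r : Fin (P.nr i), ∃ c : Fin (P.nc i), ∃ v ∈ S, P.entry i r c = some v) → i ∈ S)

/-- The least closure set `S`. -/
def leastClosure {n : ℕ} (P : SNFPPS n) : Set (Fin n) := ⋂₀ {S | P.Closed S}

end SNFPPS

/-- Labels for the three sets in the limit-sure construction: `s` (the set `S ∪ {1}`),
`f` (the set `F`), and `o` (the remaining set `O`). -/
inductive Lab | s | f | o
  deriving DecidableEq

section AuxGame

open Finset

variable {k m : ℕ}

/-- The pure strategy at `j`. -/
noncomputable def pureAt (j : Fin m) : stdSimplex ℝ (Fin m) :=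
  ⟨fun i => if i = j then 1 else 0,
   fun i => by dsimp only; split <;> norm_num,
   by simp⟩

lemma aux_iInf_le_sum (hm : 0 < m) (w : Fin m → ℝ) (t : stdSimplex ℝ (Fin m)) :
    (⨅ j, w j) ≤ ∑ j, w j * t.1 j := by
  haveI : Nonempty (Fin m) := ⟨⟨0, hm⟩⟩
  have h1 : (⨅ j, w j) = ∑ j, (⨅ i, w i) * t.1 j := by
    rw [← Finset.mul_sum, t.2.2, mul_one]
  rw [h1]
  exact Finset.sum_le_sum fun j _ =>
    mul_le_mul_of_nonneg_right (ciInf_le (Set.finite_range w).bddBelow j) (t.2.1 j)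

lemma aux_iInf_simplex (hm : 0 < m) (w : Fin m → ℝ) :
    (⨅ t : stdSimplex ℝ (Fin m), ∑ j, w j * t.1 j) = ⨅ j, w j := by
  haveI : Nonempty (Fin m) := ⟨⟨0, hm⟩⟩
  apply le_antisymm
  · refine le_ciInf fun j => ?_
    refine ciInf_le_of_le ⟨⨅ i, w i, ?_⟩ (pureAt j) ?_
    · rintro x ⟨t, rfl⟩; exact aux_iInf_le_sum hm w t
    · simp [pureAt, mul_ite]
  · haveI : Nonempty (stdSimplex ℝ (Fin m)) := ⟨pureAt ⟨0, hm⟩⟩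
    exact le_ciInf (aux_iInf_le_sum hm w)

lemma aux_bilin (s : Fin k → ℝ) (B : Matrix (Fin k) (Fin m) ℝ) (t : Fin m → ℝ) :
    ∑ i, ∑ j, s i * B i j * t j = ∑ j, (∑ i, s i * B i j) * t j := by
  rw [Finset.sum_comm]
  exact Finset.sum_congr rfl fun j _ => by rw [Finset.sum_mul]

lemma gameVal_eq_inner (hm : 0 < m) (B : Matrix (Fin k) (Fin m) ℝ) :
    gameVal B = ⨆ s : stdSimplex ℝ (Fin k), ⨅ j : Fin m, ∑ i, s.1 i * B i j := by
  unfold gameVal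
  congr 1; funext s
  simp only [aux_bilin]
  exact aux_iInf_simplex hm _

lemma inner_le_one (hm : 0 < m) (B : Matrix (Fin k) (Fin m) ℝ)
    (hB1 : ∀ i j, B i j ≤ 1) (s : stdSimplex ℝ (Fin k)) :
    (⨅ j : Fin m, ∑ i, s.1 i * B i j) ≤ 1 := by
  haveI : Nonempty (Fin m) := ⟨⟨0, hm⟩⟩
  refine ciInf_le_of_le (Set.finite_range _).bddBelow ⟨0, hm⟩ ?_
  calc ∑ i, s.1 i * B i ⟨0, hm⟩ ≤ ∑ i, s.1 i :=
        Finset.sum_le_sum fun i _ => by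
          have := mul_le_mul_of_nonneg_left (hB1 i ⟨0, hm⟩) (s.2.1 i)
          simpa using this
    _ = 1 := s.2.2

lemma gameVal_bddAbove (hm : 0 < m) (B : Matrix (Fin k) (Fin m) ℝ)
    (hB1 : ∀ i j, B i j ≤ 1) :
    BddAbove (Set.range fun s : stdSimplex ℝ (Fin k) =>
      ⨅ j : Fin m, ∑ i, s.1 i * B i j) := by
  refine ⟨1, ?_⟩
  rintro x ⟨s, rfl⟩
  exact inner_le_one hm B hB1 s

lemma gameVal_mono (hk : 0 < k) (hm : 0 < m) (B C : Matrix (Fin k) (Fin m) ℝ)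
    (hBC : ∀ i j, B i j ≤ C i j) (hC1 : ∀ i j, C i j ≤ 1) :
    gameVal B ≤ gameVal C := by
  haveI : Nonempty (stdSimplex ℝ (Fin k)) := ⟨pureAt ⟨0, hk⟩⟩
  haveI : Nonempty (Fin m) := ⟨⟨0, hm⟩⟩
  rw [gameVal_eq_inner hm B, gameVal_eq_inner hm C]
  refine ciSup_mono (gameVal_bddAbove hm C hC1) fun s => ?_
  refine le_ciInf fun j => ciInf_le_of_le (Set.finite_range _).bddBelow j ?_
  exact Finset.sum_le_sum fun i _ => mul_le_mul_of_nonneg_left (hBC i j) (s.2.1 i)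

end AuxGame

section AuxPoly

lemma ProbPoly.eval_nonneg' {n : ℕ} (Q : ProbPoly n) {x : Fin n → ℝ}
    (hx : ∀ i, 0 ≤ x i) : 0 ≤ Q.eval x := by
  refine Finset.sum_nonneg fun r _ => mul_nonneg (Q.p_nonneg r) ?_
  exact Finset.prod_nonneg fun i _ => pow_nonneg (hx i) _

lemma ProbPoly.eval_le_one' {n : ℕ} (Q : ProbPoly n) {x : Fin n → ℝ}
    (hx : x ∈ box01 n) : Q.eval x ≤ 1 := by
  calc Q.eval x ≤ ∑ r, Q.p r := by
        refine Finset.sum_le_sum fun r _ => ?_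
        have h1 : ∏ i, x i ^ Q.expo r i ≤ 1 :=
          Finset.prod_le_one (fun i _ => pow_nonneg (hx i).1 _)
            (fun i _ => pow_le_one₀ (hx i).1 (hx i).2)
        have := mul_le_mul_of_nonneg_left h1 (Q.p_nonneg r)
        simpa using this
    _ ≤ 1 := Q.p_sum_le_one

lemma ProbPoly.eval_mono' {n : ℕ} (Q : ProbPoly n) {x y : Fin n → ℝ}
    (hx : ∀ i, 0 ≤ x i) (hxy : x ≤ y) : Q.eval x ≤ Q.eval y := by
  refine Finset.sum_le_sum fun r _ => mul_le_mul_of_nonneg_left ?_ (Q.p_nonneg r)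
  exact Finset.prod_le_prod (fun i _ => pow_nonneg (hx i) _)
    (fun i _ => pow_le_pow_left₀ (hx i) (hxy i) _)

end AuxPoly

section AuxPPS

lemma MinimaxPPS.A_mem {n : ℕ} (P : MinimaxPPS n) (i : Fin n) {x : Fin n → ℝ}
    (hx : x ∈ box01 n) : ∀ j k, 0 ≤ P.A i x j k ∧ P.A i x j k ≤ 1 := fun j k =>
  ⟨(P.q i j k).eval_nonneg' (fun i' => (hx i').1), (P.q i j k).eval_le_one' hx⟩

lemma MinimaxPPS.eval_mem {n : ℕ} (P : MinimaxPPS n) {x : Fin n → ℝ}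
    (hx : x ∈ box01 n) : P.eval x ∈ box01 n := by
  intro i
  have hk := P.nr_pos i
  have hm := P.nc_pos i
  haveI : Nonempty (stdSimplex ℝ (Fin (P.nr i))) := ⟨pureAt ⟨0, hk⟩⟩
  have hA := P.A_mem i hx
  constructor
  · rw [MinimaxPPS.eval, gameVal_eq_inner hm]
    refine le_ciSup_of_le (gameVal_bddAbove hm _ (fun j k => (hA j k).2)) (pureAt ⟨0, hk⟩) ?_
    haveI : Nonempty (Fin (P.nc i)) := ⟨⟨0, hm⟩⟩
    refine le_ciInf fun j => Finset.sum_nonneg fun j' _ =>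
      mul_nonneg ((pureAt (⟨0, hk⟩ : Fin (P.nr i))).2.1 j') (hA j' j).1
  · rw [MinimaxPPS.eval, gameVal_eq_inner hm]
    exact ciSup_le fun s => inner_le_one hm _ (fun j k => (hA j k).2) s

lemma MinimaxPPS.eval_mono {n : ℕ} (P : MinimaxPPS n) {x y : Fin n → ℝ}
    (hx : x ∈ box01 n) (hy : y ∈ box01 n) (hxy : x ≤ y) : P.eval x ≤ P.eval y := by
  intro i
  exact gameVal_mono (P.nr_pos i) (P.nc_pos i) _ _
    (fun j k => (P.q i j k).eval_mono' (fun i' => (hx i').1) hxy)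
    (fun j k => (P.A_mem i hy j k).2)

/-- Tarski-style: any post-fixed point of `P.eval` in the box is `≤` the GFP. -/
lemma postfix_le_gfp {n : ℕ} (P : MinimaxPPS n) {g : Fin n → ℝ} (hg : IsGFP P.eval g)
    {y : Fin n → ℝ} (hy : y ∈ box01 n) (hpost : y ≤ P.eval y) : y ≤ g := by
  set S : Set (Fin n → ℝ) := {u | u ∈ box01 n ∧ u ≤ P.eval u} with hS
  have hyS : y ∈ S := ⟨hy, hpost⟩
  set z : Fin n → ℝ := fun i => sSup ((fun u => u i) '' S) with hz
  have hbdd : ∀ i, BddAbove ((fun u => u i) '' S) := fun i =>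
    ⟨1, by rintro _ ⟨u, hu, rfl⟩; exact (hu.1 i).2⟩
  have hinS_le : ∀ u ∈ S, u ≤ z := fun u hu i => le_csSup (hbdd i) ⟨u, hu, rfl⟩
  have hzbox : z ∈ box01 n := fun i =>
    ⟨le_trans (hy i).1 (hinS_le y hyS i),
     csSup_le ⟨y i, y, hyS, rfl⟩ (by rintro _ ⟨u, hu, rfl⟩; exact (hu.1 i).2)⟩
  have hzpost : z ≤ P.eval z := by
    intro i
    refine csSup_le ⟨y i, y, hyS, rfl⟩ ?_
    rintro _ ⟨u, hu, rfl⟩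
    exact le_trans (hu.2 i) (P.eval_mono hu.1 hzbox (hinS_le u hu) i)
  have hPzS : P.eval z ∈ S :=
    ⟨P.eval_mem hzbox, P.eval_mono hzbox (P.eval_mem hzbox) hzpost⟩
  have hfix : P.eval z = z := le_antisymm (hinS_le _ hPzS) hzpost
  exact le_trans (hinS_le y hyS) (hg.2.2 z hzbox hfix)

lemma fixMax_le_eval {n : ℕ} (P : MinimaxPPS n) (σ : (i : Fin n) → Fin (P.nr i) → ℝ)
    (hσ : ∀ i, IsDist (σ i)) {x : Fin n → ℝ} (hx : x ∈ box01 n) :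
    P.fixMax σ x ≤ P.eval x := by
  intro i
  have hm := P.nc_pos i
  have hA := P.A_mem i hx
  rw [MinimaxPPS.eval, gameVal_eq_inner hm]
  have hv : P.fixMax σ x i = ⨅ j : Fin (P.nc i),
      ∑ j', ((⟨σ i, (hσ i).1, (hσ i).2⟩ : stdSimplex ℝ (Fin (P.nr i))) : Fin (P.nr i) → ℝ) j'
        * P.A i x j' j := rfl
  rw [hv]
  exact le_ciSup (gameVal_bddAbove hm _ (fun j k => (hA j k).2)) _

lemma fixMax_fixed {n : ℕ} (P : MinimaxPPS n) (σ : (i : Fin n) → Fin (P.nr i) → ℝ)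
    (g : Fin n → ℝ) (hg : P.eval g = g) (i : Fin n)
    (hatt : (⨅ t : stdSimplex ℝ (Fin (P.nc i)),
        ∑ j : Fin (P.nr i), ∑ k : Fin (P.nc i), σ i j * P.A i g j k * t.1 k)
      = gameVal (P.A i g)) :
    P.fixMax σ g i = g i := by
  have hm := P.nc_pos i
  have h1 : (⨅ t : stdSimplex ℝ (Fin (P.nc i)),
      ∑ j : Fin (P.nr i), ∑ k : Fin (P.nc i), σ i j * P.A i g j k * t.1 k)
      = ⨅ k : Fin (P.nc i), ∑ j, σ i j * P.A i g j k := by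
    simp only [aux_bilin]
    exact aux_iInf_simplex hm _
  have h0 : P.fixMax σ g i = ⨅ k : Fin (P.nc i), ∑ j, σ i j * P.A i g j k := rfl
  rw [h0, ← h1, hatt]
  exact congrFun hg i

lemma key_lemma {n : ℕ} (P : MinimaxPPS n) (g : Fin n → ℝ) (hg : IsGFP P.eval g)
    (σ : (i : Fin n) → Fin (P.nr i) → ℝ) (hσ : ∀ i, IsDist (σ i))
    (hatt : ∀ i : Fin n,
      (⨅ t : stdSimplex ℝ (Fin (P.nc i)),
        ∑ j : Fin (P.nr i), ∑ k : Fin (P.nc i), σ i j * P.A i g j k * t.1 k)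
        = gameVal (P.A i g)) :
    ∀ gσ, IsGFP (P.fixMax σ) gσ → gσ = g := by
  intro gσ hgσ
  have hgfix : P.fixMax σ g = g := funext fun i => fixMax_fixed P σ g hg.2.1 i (hatt i)
  have h1 : g ≤ gσ := hgσ.2.2 g hg.1 hgfix
  have h2 : gσ ≤ g := by
    refine postfix_le_gfp P hg hgσ.1 ?_
    have := fixMax_le_eval P σ hσ hgσ.1
    rwa [hgσ.2.1] at this
  exact le_antisymm h2 h1

lemma cont_inner {k m : ℕ} (hm : 0 < m) (B : Matrix (Fin k) (Fin m) ℝ) :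
    Continuous fun s : Fin k → ℝ => ⨅ j : Fin m, ∑ i, s i * B i j := by
  haveI : Nonempty (Fin m) := ⟨⟨0, hm⟩⟩
  have hrw : (fun s : Fin k → ℝ => ⨅ j : Fin m, ∑ i, s i * B i j)
      = fun s => Finset.univ.inf' Finset.univ_nonempty (fun j => ∑ i, s i * B i j) :=
    funext fun s => (Finset.inf'_univ_eq_ciInf _).symm
  rw [hrw, continuous_iff_continuousAt]
  intro s
  exact ContinuousAt.finset_inf'_apply Finset.univ_nonempty fun j _ =>
    (Continuous.continuousAt (by continuity))

lemma exists_opt {k m : ℕ} (hk : 0 < k) (hm : 0 < m) (B : Matrix (Fin k) (Fin m) ℝ)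
    (hB1 : ∀ i j, B i j ≤ 1) :
    ∃ s : stdSimplex ℝ (Fin k),
      (⨅ j : Fin m, ∑ i, s.1 i * B i j)
        = ⨆ s' : stdSimplex ℝ (Fin k), ⨅ j : Fin m, ∑ i, s'.1 i * B i j := by
  haveI : Nonempty (stdSimplex ℝ (Fin k)) := ⟨pureAt ⟨0, hk⟩⟩
  obtain ⟨s, hsmem, hmax⟩ := (isCompact_stdSimplex ℝ (Fin k)).exists_isMaxOn
    ⟨_, (pureAt (⟨0, hk⟩ : Fin k)).2⟩ ((cont_inner hm B).continuousOn)
  refine ⟨⟨s, hsmem⟩, le_antisymm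
    (le_ciSup (gameVal_bddAbove hm B hB1) ⟨s, hsmem⟩)
    (ciSup_le fun s' => hmax s'.2)⟩

end AuxPPS


/-- For a minimax-PPS with greatest fixed point `g*`, there exists a
mixed policy `σ*` for the max player with `g*_{σ*,*} = g*`; indeed any mixed policy
`σ` that, at every `i`, attains the value `Val(A_i(g*))` of the matrix game `A_i(g*)`
satisfies `g*_{σ,*} = g*`. -/
theorem minimaxPPS_max_has_optimal_policy_GFP {n : ℕ} (P : MinimaxPPS n)
    (g : Fin n → ℝ) (hg : IsGFP P.eval g) :
    (∃ σ : (i : Fin n) → Fin (P.nr i) → ℝ, (∀ i, IsDist (σ i)) ∧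
      ∀ gσ, IsGFP (P.fixMax σ) gσ → gσ = g) ∧
    (∀ σ : (i : Fin n) → Fin (P.nr i) → ℝ, (∀ i, IsDist (σ i)) →
      (∀ i : Fin n,
        (⨅ t : stdSimplex ℝ (Fin (P.nc i)),
          ∑ j : Fin (P.nr i), ∑ k : Fin (P.nc i), σ i j * P.A i g j k * t.1 k)
          = gameVal (P.A i g)) →
      ∀ gσ, IsGFP (P.fixMax σ) gσ → gσ = g) := by
  have part2 := fun σ hσ hatt => key_lemma P g hg σ hσ hatt
  refine ⟨?_, part2⟩
  have hex : ∀ i : Fin n, ∃ s : stdSimplex ℝ (Fin (P.nr i)),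
      (⨅ j : Fin (P.nc i), ∑ j', s.1 j' * P.A i g j' j)
        = ⨆ s' : stdSimplex ℝ (Fin (P.nr i)), ⨅ j : Fin (P.nc i), ∑ j', s'.1 j' * P.A i g j' j :=
    fun i => exists_opt (P.nr_pos i) (P.nc_pos i) _ (fun j k => (P.A_mem i hg.1 j k).2)
  choose s hs using hex
  refine ⟨fun i => (s i).1, fun i => ⟨(s i).2.1, (s i).2.2⟩, ?_⟩
  refine key_lemma P g hg _ (fun i => ⟨(s i).2.1, (s i).2.2⟩) ?_
  intro i
  have hm := P.nc_pos i
  rw [gameVal_eq_inner hm]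
  have h1 : (⨅ t : stdSimplex ℝ (Fin (P.nc i)),
      ∑ j : Fin (P.nr i), ∑ k : Fin (P.nc i), (s i).1 j * P.A i g j k * t.1 k)
      = ⨅ k : Fin (P.nc i), ∑ j, (s i).1 j * P.A i g j k := by
    simp only [aux_bilin]
    exact aux_iInf_simplex hm _
  rw [h1]
  exact hs i
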